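/- Inclusion of Hölder balls in weak Hölder classes: for every β = 1+α with α ∈ (0,1], every z0 ∈ (0,1) and every δ ∈ (0,1), one has H(δ^{-1}, δ, β) ⊂ U_{z0,δ}. -/

import Mathlib

open MeasureTheory ProbabilityTheory Real Filter Set
open scoped ENNReal NNReal

noncomputable section

/-- The sup-norm of a function over the interval `[0,1]`. -/
def supNorm01 (f : ℝ → ℝ) : ℝ := ⨆ x : Icc (0:ℝ) 1, |f x.1|

/-- The Hölder class `H(M,K,β)` of `C¹` functions on `[0,1]` with `‖S'‖ ≤ M` and
`|S'(y) - S'(x)| ≤ K |x-y|^(β-1)`. -/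
def holderClass (β M K : ℝ) : Set (ℝ → ℝ) :=
  {S | ContDiff ℝ 1 S ∧ (∀ x ∈ Icc (0:ℝ) 1, |deriv S x| ≤ M) ∧
    ∀ x ∈ Icc (0:ℝ) 1, ∀ y ∈ Icc (0:ℝ) 1, |deriv S y - deriv S x| ≤ K * |x - y| ^ (β - 1)}

/-- The local weak Hölder class `U_{z0,δ}`. -/
def weakHolderClass (β z0 δ : ℝ) : Set (ℝ → ℝ) :=
  {S | (∃ M > 0, ∃ K > 0, S ∈ holderClass β M K) ∧
    (∀ x ∈ Icc (0:ℝ) 1, |deriv S x| ≤ δ⁻¹) ∧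
    ∀ h > 0, 0 ≤ z0 - h → z0 + h ≤ 1 →
      |∫ u in (-1:ℝ)..1, (S (z0 + h * u) - S z0)| ≤ δ * h ^ β}

/-- The design points `x_k = k/n`, `k = 1, …, n`, indexed by `Fin n`. -/
def xk (n : ℕ) (k : Fin n) : ℝ := ((k : ℕ) + 1 : ℝ) / n

/-- The normalizing rate `φ_n = n^(β/(2β+1))`. -/
def rate (β : ℝ) (n : ℕ) : ℝ := (n : ℝ) ^ (β / (2 * β + 1))

/-- The bandwidth `h = n^(-1/(2β+1))`. -/
def bw (β : ℝ) (n : ℕ) : ℝ := (n : ℝ) ^ (-(1 : ℝ) / (2 * β + 1))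

/-- The kernel `Q = 𝟙_{[-1,1]}`. -/
def Qker (u : ℝ) : ℝ := if u ∈ Icc (-1 : ℝ) 1 then 1 else 0

/-- `q_n = ∑_{k=1}^n Q((x_k - z0)/h)`. -/
def qn (β z0 : ℝ) (n : ℕ) : ℝ := ∑ k : Fin n, Qker ((xk n k - z0) / bw β n)

/-- The kernel estimator `Ŝ_n(z0)`. -/
def kernelEst (β z0 : ℝ) (n : ℕ) (y : Fin n → ℝ) : ℝ :=
  (qn β z0 n)⁻¹ * ∑ k : Fin n, Qker ((xk n k - z0) / bw β n) * y k

/-- Assumption (A2): `g` is bounded away from `0` and `∞`, uniformly in `x ∈ [0,1]` and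
`S ∈ C¹([0,1],ℝ)`. -/
def boundedAssumption (g : ℝ → (ℝ → ℝ) → ℝ) (gstar gsup : ℝ) : Prop :=
  0 < gstar ∧ gstar ≤ gsup ∧
    ∀ x ∈ Icc (0:ℝ) 1, ∀ S : ℝ → ℝ, ContDiff ℝ 1 S → gstar ≤ g x S ∧ g x S ≤ gsup

/-- Assumptions (A3)-(A4): `g` is Fréchet differentiable in `S`, uniformly in `x ∈ [0,1]`;
the derivative `L_{x,S0}` is linear and bounded uniformly in `x`, and the remainder
`Γ_{x,S0}(f) = g(x,S0+f) - g(x,S0) - L_{x,S0}(f)` is `o(‖f‖)` uniformly in `x`. -/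
def frechetAssumption (g : ℝ → (ℝ → ℝ) → ℝ) : Prop :=
  ∀ S0 : ℝ → ℝ, ContDiff ℝ 1 S0 →
    ∃ L : ℝ → (ℝ → ℝ) → ℝ, (∀ x ∈ Icc (0:ℝ) 1, IsLinearMap ℝ (L x)) ∧
      (∃ C : ℝ, ∀ x ∈ Icc (0:ℝ) 1, ∀ f : ℝ → ℝ, |L x f| ≤ C * supNorm01 f) ∧
      ∀ ε > 0, ∃ η > 0, ∀ f : ℝ → ℝ, ContDiff ℝ 1 f → 0 < supNorm01 f → supNorm01 f ≤ η →
        ∀ x ∈ Icc (0:ℝ) 1, |g x (S0 + f) - g x S0 - L x f| ≤ ε * supNorm01 f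

/-- Assumption (A1). -/
def kernelVarAssumption (g : ℝ → (ℝ → ℝ) → ℝ) (β z0 δ : ℝ) : Prop :=
  ∀ ε > 0, ∃ N : ℕ, ∀ n ≥ N, ∀ S ∈ weakHolderClass β z0 δ,
    |Real.sqrt ((qn β z0 n)⁻¹ *
        ∑ k : Fin n, Qker ((xk n k - z0) / bw β n) * (g (xk n k) S) ^ 2) - g z0 S| ≤ ε

/-- The law of the observations `(y_1,…,y_n)`, `y_k = S(x_k) + g(x_k,S) ξ_k`,
with `ξ_k` i.i.d. standard Gaussian: the product of the measures `N(S(x_k), g(x_k,S)²)`. -/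
def gaussModel (g : ℝ → (ℝ → ℝ) → ℝ) (S : ℝ → ℝ) (n : ℕ) : Measure (Fin n → ℝ) :=
  Measure.pi fun k => gaussianReal (S (xk n k)) (Real.toNNReal ((g (xk n k) S) ^ 2))

/-- The risk `R_{z0,δ}(S̃) = sup_{S ∈ U_{z0,δ}} E_S[φ_n |S̃ - S(z0)| / g(z0,S)]`. -/
def gaussRisk (g : ℝ → (ℝ → ℝ) → ℝ) (β z0 δ : ℝ) (n : ℕ) (T : (Fin n → ℝ) → ℝ) : ℝ≥0∞ :=
  ⨆ S ∈ weakHolderClass β z0 δ,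
    ∫⁻ y, ENNReal.ofReal (rate β n * |T y - S z0| / g z0 S) ∂(gaussModel g S n)

/-- `E|ξ|` for `ξ ~ N(0,1)`. -/
def absMomentStdGauss : ℝ := ∫ x, |x| ∂(gaussianReal 0 1)


lemma taylor_rem_bound (S : ℝ → ℝ) (hS : ContDiff ℝ 1 S) (δ α : ℝ) (hδ : 0 < δ) (hα : 0 < α)
    (hH : ∀ x ∈ Icc (0:ℝ) 1, ∀ y ∈ Icc (0:ℝ) 1, |deriv S y - deriv S x| ≤ δ * |x - y| ^ α)
    (z0 t : ℝ) (hz : z0 ∈ Icc (0:ℝ) 1) (hzt : z0 + t ∈ Icc (0:ℝ) 1) :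
    |S (z0 + t) - S z0 - t * deriv S z0| ≤ δ * |t| ^ (1 + α) := by
  have hd : Continuous (deriv S) := hS.continuous_deriv le_rfl
  have ftc : ∫ x in z0..(z0 + t), deriv S x = S (z0 + t) - S z0 :=
    intervalIntegral.integral_deriv_eq_sub (fun x _ => (hS.differentiable one_ne_zero) x)
      (hd.intervalIntegrable _ _)
  have hconst : ∫ x in z0..(z0 + t), deriv S z0 = t * deriv S z0 := by
    simp [intervalIntegral.integral_const, smul_eq_mul]
  have hsub : S (z0 + t) - S z0 - t * deriv S z0
      = ∫ x in z0..(z0 + t), (deriv S x - deriv S z0) := by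
    rw [intervalIntegral.integral_sub (hd.intervalIntegrable _ _)
      (intervalIntegrable_const), ftc, hconst]
  have hsubset : Set.uIcc z0 (z0 + t) ⊆ Icc (0:ℝ) 1 :=
    (Set.ordConnected_Icc).uIcc_subset hz hzt
  have hbound : ∀ x ∈ Set.uIoc z0 (z0 + t), |deriv S x - deriv S z0| ≤ δ * |t| ^ α := by
    intro x hx
    have hx' : x ∈ Set.uIcc z0 (z0 + t) := Set.Ioc_subset_Icc_self hx
    have hx01 : x ∈ Icc (0:ℝ) 1 := hsubset hx'
    have hxt : |z0 - x| ≤ |t| := by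
      rw [Set.mem_uIcc] at hx'
      rw [abs_sub_comm, abs_le]
      rcases hx' with ⟨h1, h2⟩ | ⟨h1, h2⟩ <;>
        constructor <;> cases' abs_cases t with h h <;> linarith [h.1, h.2]
    calc |deriv S x - deriv S z0| ≤ δ * |z0 - x| ^ α := hH z0 hz x hx01
      _ ≤ δ * |t| ^ α := by
          apply mul_le_mul_of_nonneg_left _ hδ.le
          exact Real.rpow_le_rpow (abs_nonneg _) hxt hα.le
  rw [hsub]
  have habs : |z0 + t - z0| = |t| := by ring_nf
  have hn := intervalIntegral.norm_integral_le_of_norm_le_const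
      (f := fun x => deriv S x - deriv S z0) (a := z0) (b := z0 + t) (C := δ * |t| ^ α)
      (fun x hx => by rw [Real.norm_eq_abs]; exact hbound x hx)
  rw [Real.norm_eq_abs] at hn
  calc |∫ x in z0..(z0 + t), (deriv S x - deriv S z0)| ≤ δ * |t| ^ α * |z0 + t - z0| := hn
    _ = δ * (|t| ^ α * |t|) := by rw [habs]; ring
    _ = δ * |t| ^ (1 + α) := by
        rw [Real.rpow_add' (abs_nonneg t) (by linarith), Real.rpow_one]; ring

/-- inclusion of Hölder balls in weak Hölder classes:
`H(δ⁻¹, δ, β) ⊆ U_{z0,δ}` for every `β = 1 + α`, `α ∈ (0,1]`, `z0 ∈ (0,1)`, `δ ∈ (0,1)`. -/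
theorem holder_ball_subset_weakHolder
    (α β z0 δ : ℝ) (hα0 : 0 < α) (hα1 : α ≤ 1) (hβ : β = 1 + α)
    (hz0 : z0 ∈ Ioo (0:ℝ) 1) (hδ : δ ∈ Ioo (0:ℝ) 1) :
    holderClass β δ⁻¹ δ ⊆ weakHolderClass β z0 δ := by
  intro S hS
  obtain ⟨h1, h2, h3⟩ := hS
  refine ⟨⟨δ⁻¹, inv_pos.2 hδ.1, δ, hδ.1, h1, h2, h3⟩, h2, ?_⟩
  intro h hh hl hr
  have hβ1 : β - 1 = α := by rw [hβ]; ring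
  rw [hβ1] at h3
  have hz01 : z0 ∈ Icc (0:ℝ) 1 := ⟨hz0.1.le, hz0.2.le⟩
  have hβpos : 0 < β := by rw [hβ]; linarith
  -- pointwise Taylor bound
  have key : ∀ u ∈ Icc (-1:ℝ) 1,
      |S (z0 + h * u) - S z0 - h * u * deriv S z0| ≤ δ * h ^ β * |u| ^ β := by
    intro u hu
    have hu1 : |u| ≤ 1 := abs_le.2 ⟨hu.1, hu.2⟩
    have hzt : z0 + h * u ∈ Icc (0:ℝ) 1 := by
      have : |h * u| ≤ h := by
        rw [abs_mul, abs_of_pos hh]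
        calc h * |u| ≤ h * 1 := by nlinarith
          _ = h := mul_one h
      rw [abs_le] at this
      constructor <;> linarith [this.1, this.2]
    have := taylor_rem_bound S h1 δ α hδ.1 hα0 h3 z0 (h * u) hz01 hzt
    calc |S (z0 + h * u) - S z0 - h * u * deriv S z0| ≤ δ * |h * u| ^ (1 + α) := this
      _ = δ * h ^ β * |u| ^ β := by
          rw [abs_mul, abs_of_pos hh, Real.mul_rpow hh.le (abs_nonneg u), hβ]; ring
  -- continuity of pieces
  have hcG : Continuous fun u : ℝ => h * u * deriv S z0 :=
    (continuous_const.mul continuous_id').mul continuous_const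
  have hcF : Continuous fun u : ℝ => S (z0 + h * u) - S z0 - h * u * deriv S z0 :=
    ((h1.continuous.comp (continuous_const.add
      (continuous_const.mul continuous_id'))).sub continuous_const).sub hcG
  have hcB : Continuous fun u : ℝ => δ * h ^ β * |u| ^ β :=
    continuous_const.mul (continuous_abs.rpow_const (fun x => Or.inr hβpos.le))
  -- split integral
  have split : (fun u : ℝ => S (z0 + h * u) - S z0)
      = fun u => (S (z0 + h * u) - S z0 - h * u * deriv S z0) + h * u * deriv S z0 := by
    funext u; ring
  have hint2 : ∫ u in (-1:ℝ)..1, h * u * deriv S z0 = 0 := by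
    have : (fun u : ℝ => h * u * deriv S z0) = fun u : ℝ => (h * deriv S z0) * u := by
      funext u; ring
    rw [this, intervalIntegral.integral_const_mul, integral_id]
    norm_num
  rw [split, intervalIntegral.integral_add (hcF.intervalIntegrable _ _)
    (hcG.intervalIntegrable _ _),
    hint2, add_zero]
  -- bound the remainder integral
  have step1 : |∫ u in (-1:ℝ)..1, (S (z0 + h * u) - S z0 - h * u * deriv S z0)|
      ≤ ∫ u in (-1:ℝ)..1, |S (z0 + h * u) - S z0 - h * u * deriv S z0| := by
    have := intervalIntegral.norm_integral_le_integral_norm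
      (μ := volume) (f := fun u : ℝ => S (z0 + h * u) - S z0 - h * u * deriv S z0) (by norm_num : (-1:ℝ) ≤ 1)
    simpa [Real.norm_eq_abs] using this
  have step2 : (∫ u in (-1:ℝ)..1, |S (z0 + h * u) - S z0 - h * u * deriv S z0|)
      ≤ ∫ u in (-1:ℝ)..1, δ * h ^ β * |u| ^ β := by
    apply intervalIntegral.integral_mono_on (by norm_num)
      (hcF.abs.intervalIntegrable _ _) (hcB.intervalIntegrable _ _)
    exact key
  have hval : ∫ u in (-1:ℝ)..1, δ * h ^ β * |u| ^ β = δ * h ^ β * (2 / (β + 1)) := by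
    rw [intervalIntegral.integral_const_mul]
    congr 1
    have i01 : ∫ u in (0:ℝ)..1, |u| ^ β = 1 / (β + 1) := by
      rw [intervalIntegral.integral_congr (g := fun u : ℝ => u ^ β) (by
        intro u hu
        rw [Set.uIcc_of_le (by norm_num : (0:ℝ) ≤ 1)] at hu
        simp [abs_of_nonneg hu.1])]
      rw [integral_rpow (Or.inl (by linarith))]
      rw [Real.one_rpow, Real.zero_rpow (by linarith)]
      norm_num
    have im10 : ∫ u in (-1:ℝ)..0, |u| ^ β = 1 / (β + 1) := by
      have := intervalIntegral.integral_comp_neg (a := (0:ℝ)) (b := 1)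
        (f := fun u : ℝ => |u| ^ β)
      simp only [abs_neg, neg_zero, neg_neg] at this
      rw [← this]
      exact i01
    rw [← intervalIntegral.integral_add_adjacent_intervals (a := (-1:ℝ)) (b := 0) (c := 1)
      ((continuous_abs.rpow_const (fun x => Or.inr hβpos.le)).intervalIntegrable _ _)
      ((continuous_abs.rpow_const (fun x => Or.inr hβpos.le)).intervalIntegrable _ _),
      i01, im10]
    ring
  have hδ0 : 0 < δ := hδ.1
  have hfinal : δ * h ^ β * (2 / (β + 1)) ≤ δ * h ^ β := by
    have hpos : 0 ≤ δ * h ^ β := by positivity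
    have : 2 / (β + 1) ≤ 1 := by
      rw [div_le_one (by linarith)]; rw [hβ]; linarith
    nlinarith
  calc _ ≤ _ := step1
    _ ≤ _ := step2
    _ = _ := hval
    _ ≤ _ := hfinal
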